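/- Every meet irreducible proper two-sided ideal of T_n, the upper triangular n×n complex matrices, has the form I(i₀,j₀) = { A ∈ T_n : A i j = 0 whenever i₀ ≤ i ≤ j ≤ j₀ } for some 1 ≤ i₀ ≤ j₀ ≤ n. -/

import Mathlib

open Matrix

/-- The algebra `T_n` of upper triangular `n × n` complex matrices. -/
def UT (n : ℕ) : Subalgebra ℂ (Matrix (Fin n) (Fin n) ℂ) where
  carrier := {A | ∀ i j : Fin n, j < i → A i j = 0}
  add_mem' := by
    intro a b ha hb i j hij
    simp [Matrix.add_apply, ha i j hij, hb i j hij]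
  mul_mem' := by
    intro a b ha hb i j hij
    show ∑ k, a i k * b k j = 0
    apply Finset.sum_eq_zero
    intro k _
    rcases lt_or_ge k i with h | h
    · rw [ha i k h, zero_mul]
    · rw [hb k j (lt_of_lt_of_le hij h), mul_zero]
  algebraMap_mem' := by
    intro r i j hij
    simp [Matrix.algebraMap_matrix_apply, (ne_of_lt hij).symm]

/-- The "wedge" set `I(i₀, j₀)` of upper triangular matrices vanishing on the
wedge `i₀ ≤ i ≤ j ≤ j₀`. -/
def wedge (n : ℕ) (i₀ j₀ : Fin n) : Set (UT n) :=
  {A | ∀ i j : Fin n, i₀ ≤ i → i ≤ j → j ≤ j₀ → (A : Matrix (Fin n) (Fin n) ℂ) i j = 0}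
/-- The wedge ideal `I(i₀, j₀)` as a two-sided ideal of `T_n`. -/
def wedgeIdeal (n : ℕ) (i₀ j₀ : Fin n) : TwoSidedIdeal (UT n) :=
  TwoSidedIdeal.mk' (wedge n i₀ j₀)
    (by intro i j _ _ _; rfl)
    (by
      intro x y hx hy i j h1 h2 h3
      show (x : Matrix (Fin n) (Fin n) ℂ) i j + (y : Matrix (Fin n) (Fin n) ℂ) i j = 0
      rw [hx i j h1 h2 h3, hy i j h1 h2 h3, add_zero])
    (by
      intro x hx i j h1 h2 h3
      show -(x : Matrix (Fin n) (Fin n) ℂ) i j = 0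
      rw [hx i j h1 h2 h3, neg_zero])
    (by
      intro x y hy i j h1 h2 h3
      show ∑ k, (x : Matrix (Fin n) (Fin n) ℂ) i k * (y : Matrix (Fin n) (Fin n) ℂ) k j = 0
      apply Finset.sum_eq_zero
      intro k _
      rcases lt_or_ge k i with h | h
      · rw [x.2 i k h, zero_mul]
      · rcases le_or_gt k j with h' | h'
        · rw [hy k j (le_trans h1 h) h' h3, mul_zero]
        · rw [y.2 k j h', mul_zero])
    (by
      intro x y hx i j h1 h2 h3
      show ∑ k, (x : Matrix (Fin n) (Fin n) ℂ) i k * (y : Matrix (Fin n) (Fin n) ℂ) k j = 0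
      apply Finset.sum_eq_zero
      intro k _
      rcases lt_or_ge k i with h | h
      · rw [x.2 i k h, zero_mul]
      · rcases le_or_gt k j with h' | h'
        · rw [hx i k h1 h (le_trans h' h3), zero_mul]
        · rw [y.2 k j h', mul_zero])

/-- An ideal `J` is *meet irreducible* if whenever two ideals containing `J`
intersect in `J`, one of them equals `J`. -/
def MeetIrred {R : Type*} [NonUnitalNonAssocRing R] (J : TwoSidedIdeal R) : Prop :=
  ∀ I₁ I₂ : TwoSidedIdeal R, J ≤ I₁ → J ≤ I₂ → I₁ ⊓ I₂ = J → I₁ = J ∨ I₂ = J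

set_option maxHeartbeats 1000000
set_option synthInstance.maxHeartbeats 1000000

namespace WedgeAux

variable {n : ℕ}

/-- The matrix unit `E_{ij}` as an element of `UT n` (zero if `¬ i ≤ j`). -/
noncomputable def Eu (i j : Fin n) : UT n :=
  if h : i ≤ j then
    ⟨Matrix.single i j 1, by
      intro a b hb
      simp only [Matrix.single, Matrix.of_apply, ite_eq_right_iff]
      rintro ⟨rfl, rfl⟩
      exact absurd h (not_le.2 hb)⟩
  else 0

lemma Eu_coe {i j : Fin n} (h : i ≤ j) :
    (Eu i j : Matrix (Fin n) (Fin n) ℂ) = Matrix.single i j 1 := by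
  simp [Eu, h]

lemma Eu_of_not_le {i j : Fin n} (h : ¬ i ≤ j) : Eu i j = 0 := dif_neg h

lemma smul_mem' (I : TwoSidedIdeal (UT n)) (c : ℂ) {x : UT n} (hx : x ∈ I) : c • x ∈ I := by
  rw [Algebra.smul_def]
  exact I.mul_mem_left _ _ hx

lemma Eu_mem_of_apply_ne_zero (I : TwoSidedIdeal (UT n)) {A : UT n} (hA : A ∈ I)
    {i j : Fin n} (hij : i ≤ j) (hne : (A : Matrix (Fin n) (Fin n) ℂ) i j ≠ 0) :
    Eu i j ∈ I := by
  have h1 : Eu i i * A * Eu j j ∈ I := I.mul_mem_right _ _ (I.mul_mem_left _ _ hA)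
  have h2 : Eu i i * A * Eu j j = ((A : Matrix (Fin n) (Fin n) ℂ) i j) • Eu i j := by
    apply Subtype.ext
    show (Eu i i : Matrix (Fin n) (Fin n) ℂ) * (A : Matrix (Fin n) (Fin n) ℂ) *
      (Eu j j : Matrix (Fin n) (Fin n) ℂ) =
      ((A : Matrix (Fin n) (Fin n) ℂ) i j) • (Eu i j : Matrix (Fin n) (Fin n) ℂ)
    rw [Eu_coe le_rfl, Eu_coe le_rfl, Eu_coe hij, Matrix.smul_single,
      smul_eq_mul, mul_one]
    ext p q
    rcases eq_or_ne q j with rfl | hb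
    · rw [Matrix.mul_single_apply_same]
      rcases eq_or_ne p i with rfl | ha
      · rw [Matrix.single_mul_apply_same, one_mul, mul_one]
        simp [Matrix.single]
      · rw [Matrix.single_mul_apply_of_ne (h := ha), zero_mul]
        simp [Matrix.single, Ne.symm ha]
    · rw [Matrix.mul_single_apply_of_ne (hbj := hb)]
      simp [Matrix.single, Ne.symm hb]
  have h3 : Eu i j = ((A : Matrix (Fin n) (Fin n) ℂ) i j)⁻¹ • (Eu i i * A * Eu j j) := by
    rw [h2, smul_smul, inv_mul_cancel₀ hne, one_smul]
  rw [h3]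
  exact smul_mem' I _ h1

lemma mem_of_forall (I : TwoSidedIdeal (UT n)) {A : UT n}
    (h : ∀ i j : Fin n, i ≤ j → Eu i j ∈ I ∨ (A : Matrix (Fin n) (Fin n) ℂ) i j = 0) :
    A ∈ I := by
  have hA : A = ∑ p : Fin n × Fin n, ((A : Matrix (Fin n) (Fin n) ℂ) p.1 p.2) • Eu p.1 p.2 := by
    apply Subtype.ext
    rw [AddSubmonoidClass.coe_finset_sum]
    ext a b
    rw [Matrix.sum_apply]
    have key : ∀ p : Fin n × Fin n,
        ((((A : Matrix (Fin n) (Fin n) ℂ) p.1 p.2) • Eu p.1 p.2 : UT n) :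
          Matrix (Fin n) (Fin n) ℂ) a b
          = if p = (a, b) then (A : Matrix (Fin n) (Fin n) ℂ) a b else 0 := by
      rintro ⟨i, j⟩
      rw [SetLike.val_smul]
      by_cases hij : i ≤ j
      · rw [Eu_coe hij]
        simp only [Matrix.smul_apply, Matrix.single, Matrix.of_apply, smul_eq_mul,
          Prod.mk.injEq]
        by_cases hab : i = a ∧ j = b
        · obtain ⟨rfl, rfl⟩ := hab
          simp
        · rw [if_neg hab, if_neg hab, mul_zero]
      · rw [Eu_of_not_le hij]
        by_cases hab : (i, j) = (a, b)
        · rw [Prod.mk.injEq] at hab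
          obtain ⟨rfl, rfl⟩ := hab
          rw [if_pos rfl]
          rw [A.2 i j (not_le.1 hij)]
          simp
        · rw [if_neg hab]
          simp
    simp only [key]
    rw [Finset.sum_ite_eq' Finset.univ (a, b)
      (fun _ => (A : Matrix (Fin n) (Fin n) ℂ) a b)]
    simp
  rw [hA]
  refine I.finsetSum_mem _ _ fun p _ => ?_
  rcases le_or_gt p.1 p.2 with hp | hp
  · rcases h p.1 p.2 hp with hI | h0
    · exact smul_mem' I _ hI
    · rw [h0, zero_smul]
      exact I.zero_mem
  · rw [A.2 p.1 p.2 hp, zero_smul]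
    exact I.zero_mem

/-- A set of index pairs closed under passing to subintervals. -/
def DownClosed (C : Set (Fin n × Fin n)) : Prop :=
  ∀ ⦃i j i' j' : Fin n⦄, (i, j) ∈ C → i ≤ i' → i' ≤ j' → j' ≤ j → (i', j') ∈ C

/-- The two-sided ideal of upper triangular matrices vanishing on a down-closed set. -/
def idealOf (C : Set (Fin n × Fin n)) (hC : DownClosed C) : TwoSidedIdeal (UT n) :=
  TwoSidedIdeal.mk'
    {A | ∀ i j : Fin n, (i, j) ∈ C → i ≤ j → (A : Matrix (Fin n) (Fin n) ℂ) i j = 0}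
    (fun i j _ _ => rfl)
    (fun {x y} hx hy i j hc hij => by
      show (x : Matrix (Fin n) (Fin n) ℂ) i j + (y : Matrix (Fin n) (Fin n) ℂ) i j = 0
      rw [hx i j hc hij, hy i j hc hij, add_zero])
    (fun {x} hx i j hc hij => by
      show -(x : Matrix (Fin n) (Fin n) ℂ) i j = 0
      rw [hx i j hc hij, neg_zero])
    (fun {x y} hy i j hc hij => by
      show ∑ k, (x : Matrix (Fin n) (Fin n) ℂ) i k * (y : Matrix (Fin n) (Fin n) ℂ) k j = 0
      refine Finset.sum_eq_zero fun k _ => ?_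
      rcases lt_or_ge k i with h | h
      · rw [x.2 i k h, zero_mul]
      · rcases le_or_gt k j with h' | h'
        · rw [hy k j (hC hc h h' le_rfl) h', mul_zero]
        · rw [y.2 k j h', mul_zero])
    (fun {x y} hx i j hc hij => by
      show ∑ k, (x : Matrix (Fin n) (Fin n) ℂ) i k * (y : Matrix (Fin n) (Fin n) ℂ) k j = 0
      refine Finset.sum_eq_zero fun k _ => ?_
      rcases lt_or_ge k i with h | h
      · rw [x.2 i k h, zero_mul]
      · rcases le_or_gt k j with h' | h'
        · rw [hx i k (hC hc le_rfl h h') h, zero_mul]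
        · rw [y.2 k j h', mul_zero])

lemma mem_idealOf {C : Set (Fin n × Fin n)} {hC : DownClosed C} {A : UT n} :
    A ∈ idealOf C hC ↔
      ∀ i j : Fin n, (i, j) ∈ C → i ≤ j → (A : Matrix (Fin n) (Fin n) ℂ) i j = 0 :=
  TwoSidedIdeal.mem_mk' _ _ _ _ _ _ _

end WedgeAux

open WedgeAux in
/-- every meet irreducible proper two-sided ideal of `T_n` is a
wedge ideal `I(i₀,j₀)` for some `i₀ ≤ j₀`. -/
theorem meetIrreducible_eq_wedgeIdeal (n : ℕ) (I : TwoSidedIdeal (UT n))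
    (hproper : I ≠ ⊤) (hmi : MeetIrred I) :
    ∃ i₀ j₀ : Fin n, i₀ ≤ j₀ ∧ I = wedgeIdeal n i₀ j₀ := by
  classical
  set C : Set (Fin n × Fin n) := {p | Eu p.1 p.2 ∉ I} with hCdef
  have hCle : ∀ p ∈ C, p.1 ≤ p.2 := by
    rintro ⟨i, j⟩ hp
    by_contra h
    exact hp (Eu_of_not_le h ▸ I.zero_mem)
  have hCdown : DownClosed C := by
    rintro i j i' j' hp h1 h2 h3 hmem
    apply hp
    have hij : i ≤ j := hCle _ hp
    have hkey : Eu i i' * Eu i' j' * Eu j' j = (Eu i j : UT n) := by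
      apply Subtype.ext
      show (Eu i i' : Matrix (Fin n) (Fin n) ℂ) * (Eu i' j' : Matrix (Fin n) (Fin n) ℂ) *
        (Eu j' j : Matrix (Fin n) (Fin n) ℂ) = (Eu i j : Matrix (Fin n) (Fin n) ℂ)
      rw [Eu_coe h1, Eu_coe h2, Eu_coe h3, Eu_coe hij,
        Matrix.single_mul_single_same, Matrix.single_mul_single_same, one_mul, one_mul]
    rw [← hkey]
    exact I.mul_mem_right _ _ (I.mul_mem_left _ _ hmem)
  have hIC : I = idealOf C hCdown := by
    ext A
    rw [mem_idealOf]
    constructor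
    · intro hA i j hij hle
      by_contra hne
      exact hij (Eu_mem_of_apply_ne_zero I hA hle hne)
    · intro hA
      refine mem_of_forall I fun i j hle => ?_
      by_cases hm : Eu i j ∈ I
      · exact Or.inl hm
      · exact Or.inr (hA i j hm hle)
  have hCne : C.Nonempty := by
    by_contra h
    apply hproper
    ext A
    simp only [TwoSidedIdeal.mem_top, iff_true]
    refine mem_of_forall I fun i j _ => ?_
    left
    by_contra hm
    exact h ⟨(i, j), hm⟩
  set S : Finset (Fin n × Fin n) := Finset.univ.filter (· ∈ C) with hSdef
  have hSC : ∀ p, p ∈ S ↔ p ∈ C := fun p => by simp [hSdef]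
  obtain ⟨p₀, hp₀⟩ := hCne
  have hSne : S.Nonempty := ⟨p₀, (hSC p₀).2 hp₀⟩
  set i₀ := (S.image Prod.fst).min' (hSne.image _) with hi₀def
  set j₀ := (S.image Prod.snd).max' (hSne.image _) with hj₀def
  have hi₀ : ∀ p ∈ C, i₀ ≤ p.1 := fun p hp =>
    Finset.min'_le _ _ (Finset.mem_image_of_mem _ ((hSC p).2 hp))
  have hj₀ : ∀ p ∈ C, p.2 ≤ j₀ := fun p hp =>
    Finset.le_max' _ _ (Finset.mem_image_of_mem _ ((hSC p).2 hp))
  obtain ⟨pa, hpa, hpa1⟩ : ∃ p ∈ S, p.1 = i₀ := by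
    have := (S.image Prod.fst).min'_mem (hSne.image _)
    simpa [Finset.mem_image] using this
  obtain ⟨pb, hpb, hpb2⟩ : ∃ p ∈ S, p.2 = j₀ := by
    have := (S.image Prod.snd).max'_mem (hSne.image _)
    simpa [Finset.mem_image] using this
  have hpaC : pa ∈ C := (hSC pa).1 hpa
  have hpbC : pb ∈ C := (hSC pb).1 hpb
  have hij₀ : i₀ ≤ j₀ := by
    rw [← hpa1]
    exact le_trans (hCle pa hpaC) (hj₀ pa hpaC)
  set b := pa.2 with hbdef
  set a := pb.1 with hadef
  have hab1 : (i₀, b) ∈ C := by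
    have : (pa.1, pa.2) ∈ C := by simpa using hpaC
    rwa [hpa1] at this
  have hab2 : (a, j₀) ∈ C := by
    have : (pb.1, pb.2) ∈ C := by simpa using hpbC
    rwa [hpb2] at this
  have hi₀b : i₀ ≤ b := hCle _ hab1
  have haj₀ : a ≤ j₀ := hCle _ hab2
  have hkey : (i₀, j₀) ∈ C := by
    by_contra hnot
    set C₁ : Set (Fin n × Fin n) := {p ∈ C | ¬(p.1 = i₀ ∧ b ≤ p.2)} with hC₁def
    set C₂ : Set (Fin n × Fin n) := {p ∈ C | ¬(p.1 ≤ a ∧ p.2 = j₀)} with hC₂def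
    have hC₁ : DownClosed C₁ := by
      rintro i j i' j' ⟨hp, hno⟩ h1 h2 h3
      refine ⟨hCdown hp h1 h2 h3, ?_⟩
      rintro ⟨rfl, hb⟩
      exact hno ⟨le_antisymm h1 (hi₀ _ hp), le_trans hb h3⟩
    have hC₂ : DownClosed C₂ := by
      rintro i j i' j' ⟨hp, hno⟩ h1 h2 h3
      refine ⟨hCdown hp h1 h2 h3, ?_⟩
      rintro ⟨ha', rfl⟩
      exact hno ⟨le_trans h1 ha', le_antisymm (hj₀ _ hp) h3⟩
    have hI1 : I ≤ idealOf C₁ hC₁ := by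
      intro x hx
      have hx' : x ∈ I := hx
      rw [hIC, mem_idealOf] at hx'
      show x ∈ idealOf C₁ hC₁
      rw [mem_idealOf]
      exact fun i j hij hle => hx' i j hij.1 hle
    have hI2 : I ≤ idealOf C₂ hC₂ := by
      intro x hx
      have hx' : x ∈ I := hx
      rw [hIC, mem_idealOf] at hx'
      show x ∈ idealOf C₂ hC₂
      rw [mem_idealOf]
      exact fun i j hij hle => hx' i j hij.1 hle
    have hinf : idealOf C₁ hC₁ ⊓ idealOf C₂ hC₂ = I := by
      ext x
      rw [TwoSidedIdeal.mem_inf, mem_idealOf, mem_idealOf, hIC, mem_idealOf]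
      constructor
      · rintro ⟨h1, h2⟩ i j hij hle
        by_cases hc1 : i = i₀ ∧ b ≤ j
        · by_cases hc2 : i ≤ a ∧ j = j₀
          · exfalso
            obtain ⟨rfl, -⟩ := hc1
            obtain ⟨-, rfl⟩ := hc2
            exact hnot hij
          · exact h2 i j ⟨hij, hc2⟩ hle
        · exact h1 i j ⟨hij, hc1⟩ hle
      · intro h
        exact ⟨fun i j hij hle => h i j hij.1 hle, fun i j hij hle => h i j hij.1 hle⟩
    have hmem1 : Eu i₀ b ∈ idealOf C₁ hC₁ := by
      rw [mem_idealOf]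
      intro i j hij _
      rw [Eu_coe hi₀b]
      simp only [Matrix.single, Matrix.of_apply, ite_eq_right_iff]
      rintro ⟨rfl, rfl⟩
      exact absurd ⟨rfl, le_rfl⟩ hij.2
    have hmem2 : Eu a j₀ ∈ idealOf C₂ hC₂ := by
      rw [mem_idealOf]
      intro i j hij _
      rw [Eu_coe haj₀]
      simp only [Matrix.single, Matrix.of_apply, ite_eq_right_iff]
      rintro ⟨rfl, rfl⟩
      exact absurd ⟨le_rfl, rfl⟩ hij.2
    rcases hmi _ _ hI1 hI2 hinf with h | h
    · exact hab1 (h ▸ hmem1)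
    · exact hab2 (h ▸ hmem2)
  refine ⟨i₀, j₀, hij₀, ?_⟩
  rw [hIC]
  ext A
  rw [mem_idealOf]
  constructor
  · intro hA
    refine (TwoSidedIdeal.mem_mk' (wedge n i₀ j₀) _ _ _ _ _ A).2 ?_
    intro i j h1 h2 h3
    exact hA i j (hCdown hkey h1 h2 h3) h2
  · intro hA i j hij hle
    replace hA := (TwoSidedIdeal.mem_mk' (wedge n i₀ j₀) _ _ _ _ _ A).1 hA
    exact hA i j (hi₀ _ hij) hle (hj₀ _ hij)
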